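/- Let x_1, …, x_n be nonzero vectors in ℝ^d, let G be the n×n Gram matrix with G_{ij} = ⟨x_i, x_j⟩, and let K be the n×n matrix with K_{ij} = ⟨x_i, x_j⟩ · (1 − θ_{ij}/π), where θ_{ij} = arccos(⟨x_i, x_j⟩/(‖x_i‖‖x_j‖)) is the angle between x_i and x_j (θ_{ii} = 0, so K_{ii} = ‖x_i‖²). Then λ_min(K) ≥ λ_min(G) and λ_max(K) ≤ λ_max(G); consequently, if G is positive definite, then K is positive definite and the condition numbers satisfy κ(K) = λ_max(K)/λ_min(K) ≤ λ_max(G)/λ_min(G) = κ(G). -/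

import Mathlib

open scoped RealInnerProductSpace

namespace ShallowNTKAux

open Finset

noncomputable def bb (k : ℕ) : ℝ := (Nat.centralBinom k : ℝ) / 4 ^ k

noncomputable def cc (k : ℕ) : ℝ := bb k / (2 * k + 1)

lemma bb_pos (k : ℕ) : 0 < bb k :=
  div_pos (by exact_mod_cast Nat.centralBinom_pos k) (by positivity)

lemma bb_le_one (k : ℕ) : bb k ≤ 1 := by
  rw [bb, div_le_one (by positivity)]
  have h : Nat.centralBinom k ≤ 4 ^ k := by
    have h1 : Nat.centralBinom k ≤ ∑ m ∈ range (2 * k + 1), (2 * k).choose m := by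
      rw [Nat.centralBinom]
      exact Finset.single_le_sum (fun m _ => Nat.zero_le _)
        (Finset.mem_range.2 (by omega))
    rw [Nat.sum_range_choose] at h1
    calc Nat.centralBinom k ≤ 2 ^ (2 * k) := h1
    _ = 4 ^ k := by rw [pow_mul]; norm_num
  exact_mod_cast calc (Nat.centralBinom k : ℝ) ≤ ((4 ^ k : ℕ) : ℝ) := by exact_mod_cast h
    _ = (4 : ℝ) ^ k := by push_cast; ring

lemma bb_rec (k : ℕ) : (2 * (k + 1) : ℝ) * bb (k + 1) = (2 * k + 1) * bb k := by
  have h := Nat.succ_mul_centralBinom_succ k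
  have h4 : (4 : ℝ) ^ (k + 1) = 4 * 4 ^ k := by ring
  rw [bb, bb, h4]
  have hc : ((k + 1 : ℕ) : ℝ) * (Nat.centralBinom (k + 1) : ℝ)
      = 2 * (2 * k + 1) * (Nat.centralBinom k : ℝ) := by exact_mod_cast congrArg (Nat.cast (R := ℝ)) h
  have h4k : (4 : ℝ) ^ k ≠ 0 := by positivity
  rw [mul_div_assoc', mul_div_assoc', div_eq_div_iff (by positivity) h4k]
  push_cast at hc ⊢
  linear_combination (2 * (4:ℝ) ^ k) * hc

lemma cc_nonneg (k : ℕ) : 0 ≤ cc k :=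
  div_nonneg (bb_pos k).le (by positivity)

lemma cc_le_one (k : ℕ) : cc k ≤ 1 := by
  rw [cc]
  have h1 : (0:ℝ) < 2 * k + 1 := by positivity
  rw [div_le_one h1]
  calc bb k ≤ 1 := bb_le_one k
  _ ≤ 2 * k + 1 := by push_cast; nlinarith [Nat.cast_nonneg (α := ℝ) k]

/-- master summability lemma -/
lemma summable_master {t : ℝ} (ht : |t| < 1) (p : ℕ → ℝ) (e : ℕ → ℕ)
    (hp : ∀ k, |p k| ≤ 2 * k + 2) (he : ∀ k, k ≤ e k) :
    Summable (fun k => p k * t ^ e k) := by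
  have h0 : 0 ≤ |t| := abs_nonneg t
  refine Summable.of_norm_bounded (g := fun k => (2 * (k:ℝ) + 2) * |t| ^ k) ?_ ?_
  · have h1 : Summable (fun k : ℕ => (k : ℝ) * |t| ^ k) := by
      simpa using summable_pow_mul_geometric_of_norm_lt_one 1 (r := |t|) (by rwa [Real.norm_eq_abs, abs_abs])
    have h2 : Summable (fun k : ℕ => |t| ^ k) :=
      summable_geometric_of_lt_one h0 ht
    have := (h1.mul_left 2).add (h2.mul_left 2)
    apply this.congr
    intro k; ring
  · intro k
    rw [norm_mul, norm_pow]
    have h2 : ‖t‖ ^ e k ≤ |t| ^ k := by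
      rw [Real.norm_eq_abs]
      exact pow_le_pow_of_le_one h0 ht.le (he k)
    have h3 : ‖p k‖ ≤ 2 * k + 2 := hp k
    have h4 : (0:ℝ) ≤ ‖p k‖ := norm_nonneg _
    have h5 : (0:ℝ) ≤ |t| ^ e k := by positivity
    calc ‖p k‖ * ‖t‖ ^ e k ≤ (2 * k + 2) * |t| ^ k := by
          apply mul_le_mul h3 h2 (by positivity) (by positivity)


noncomputable def AA (t : ℝ) : ℝ := ∑' k, cc k * t ^ (2 * k + 1)

noncomputable def A1 (t : ℝ) : ℝ := ∑' k, bb k * t ^ (2 * k)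

noncomputable def DD (t : ℝ) : ℝ := ∑' k, bb k * ((2 * k : ℝ) * t ^ (2 * k - 1))

lemma summable_A1 {t : ℝ} (ht : |t| < 1) : Summable (fun k => bb k * t ^ (2 * k)) :=
  summable_master ht _ _ (fun k => by
    rw [abs_of_pos (bb_pos k)]
    have := bb_le_one k; have : (0:ℝ) ≤ k := Nat.cast_nonneg k; linarith [bb_le_one k])
    (fun k => by omega)

lemma summable_AA {t : ℝ} (ht : |t| < 1) : Summable (fun k => cc k * t ^ (2 * k + 1)) :=
  summable_master ht _ _ (fun k => by
    rw [abs_of_nonneg (cc_nonneg k)]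
    have := cc_le_one k; have : (0:ℝ) ≤ k := Nat.cast_nonneg k; linarith)
    (fun k => by omega)

lemma summable_DD {t : ℝ} (ht : |t| < 1) :
    Summable (fun k => bb k * ((2 * k : ℝ) * t ^ (2 * k - 1))) := by
  have := summable_master ht (fun k => bb k * (2 * k : ℝ)) (fun k => 2 * k - 1)
    (fun k => by
      have hb1 := bb_le_one k
      have hb0 := (bb_pos k).le
      have hk : (0:ℝ) ≤ (k:ℝ) := Nat.cast_nonneg k
      show |bb k * (2 * (k:ℝ))| ≤ 2 * k + 2
      rw [abs_of_nonneg (by positivity)]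
      nlinarith)
    (fun k => by show k ≤ 2 * k - 1; omega)
  exact this.congr (fun k => by ring)

-- derivative of A1
lemma hasDerivAt_A1 {t : ℝ} (ht : |t| < 1) : HasDerivAt A1 (DD t) t := by
  set r : ℝ := (|t| + 1) / 2 with hr
  have h0 : 0 ≤ |t| := abs_nonneg t
  have hr1 : r < 1 := by rw [hr]; linarith
  have hrt : |t| < r := by rw [hr]; linarith
  have hr0 : (0:ℝ) < r := by rw [hr]; linarith
  have hmem : t ∈ Set.Ioo (-r) r := by
    constructor
    · linarith [neg_abs_le t, neg_lt_neg hrt]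
    · linarith [le_abs_self t]
  have key : HasDerivAt (fun z => ∑' k, bb k * z ^ (2 * k))
      (∑' k, bb k * ((2 * k : ℝ) * t ^ (2 * k - 1))) t := by
    apply hasDerivAt_tsum_of_isPreconnected
      (u := fun k => bb k * ((2 * k : ℝ) * r ^ (2 * k - 1)))
      (g := fun k z => bb k * z ^ (2 * k))
      (g' := fun k y => bb k * ((2 * k : ℝ) * y ^ (2 * k - 1)))
      (t := Set.Ioo (-r) r) (y₀ := t)
    · -- Summable u
      have : |r| < 1 := by rwa [abs_of_pos hr0]
      exact summable_DD this
    · exact isOpen_Ioo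
    · exact (convex_Ioo _ _).isPreconnected
    · intro k y _
      have := (hasDerivAt_pow (2 * k) y).const_mul (bb k)
      simpa [mul_assoc] using this
    · intro k y hy
      have hyr : |y| ≤ r := abs_le.2 ⟨hy.1.le, hy.2.le⟩
      have h1 : |y| ^ (2 * k - 1) ≤ r ^ (2 * k - 1) :=
        pow_le_pow_left₀ (abs_nonneg y) hyr _
      have hb := (bb_pos k).le
      have h2k : (0:ℝ) ≤ 2 * (k:ℝ) := by positivity
      show ‖bb k * (2 * (k:ℝ) * y ^ (2 * k - 1))‖ ≤ bb k * (2 * (k:ℝ) * r ^ (2 * k - 1))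
      rw [Real.norm_eq_abs, abs_mul, abs_mul, abs_pow, abs_of_nonneg hb, abs_of_nonneg h2k]
      exact mul_le_mul_of_nonneg_left (mul_le_mul_of_nonneg_left h1 h2k) hb
    · exact hmem
    · exact summable_A1 ht
    · exact hmem
  exact key


lemma hasDerivAt_AA {t : ℝ} (ht : |t| < 1) : HasDerivAt AA (A1 t) t := by
  set r : ℝ := (|t| + 1) / 2 with hr
  have h0 : 0 ≤ |t| := abs_nonneg t
  have hr1 : r < 1 := by rw [hr]; linarith
  have hrt : |t| < r := by rw [hr]; linarith
  have hr0 : (0:ℝ) < r := by rw [hr]; linarith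
  have hra : |r| < 1 := by rwa [abs_of_pos hr0]
  have hmem : t ∈ Set.Ioo (-r) r := by
    constructor
    · linarith [neg_abs_le t, neg_lt_neg hrt]
    · linarith [le_abs_self t]
  have key : HasDerivAt (fun z => ∑' k, cc k * z ^ (2 * k + 1))
      (∑' k, cc k * ((2 * k + 1 : ℝ) * t ^ (2 * k))) t := by
    apply hasDerivAt_tsum_of_isPreconnected
      (u := fun k => r ^ (2 * k))
      (g := fun k z => cc k * z ^ (2 * k + 1))
      (g' := fun k y => cc k * ((2 * k + 1 : ℝ) * y ^ (2 * k)))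
      (t := Set.Ioo (-r) r) (y₀ := t)
    · have hsq : Summable (fun k : ℕ => (r ^ 2) ^ k) :=
        summable_geometric_of_lt_one (by positivity) (by nlinarith)
      exact hsq.congr (fun k => (pow_mul r 2 k).symm)
    · exact isOpen_Ioo
    · exact (convex_Ioo _ _).isPreconnected
    · intro k y _
      have := (hasDerivAt_pow (2 * k + 1) y).const_mul (cc k)
      simpa [mul_assoc] using this
    · intro k y hy
      have hyr : |y| ≤ r := abs_le.2 ⟨hy.1.le, hy.2.le⟩
      have h1 : |y| ^ (2 * k) ≤ r ^ (2 * k) :=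
        pow_le_pow_left₀ (abs_nonneg y) hyr _
      have hcc := cc_nonneg k
      have h2k : (0:ℝ) ≤ 2 * (k:ℝ) + 1 := by positivity
      show ‖cc k * ((2 * (k:ℝ) + 1) * y ^ (2 * k))‖ ≤ r ^ (2 * k)
      rw [Real.norm_eq_abs, abs_mul, abs_mul, abs_pow, abs_of_nonneg hcc, abs_of_nonneg h2k]
      have hc2 : cc k * (2 * (k:ℝ) + 1) = bb k := by
        rw [cc]; field_simp
      calc cc k * ((2 * (k:ℝ) + 1) * |y| ^ (2 * k))
          = bb k * |y| ^ (2 * k) := by rw [← hc2]; ring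
      _ ≤ 1 * r ^ (2 * k) := by
          apply mul_le_mul (bb_le_one k) h1 (by positivity) (by norm_num)
      _ = r ^ (2 * k) := one_mul _
    · exact hmem
    · exact summable_AA ht
    · exact hmem
  have hval : (∑' k, cc k * ((2 * k + 1 : ℝ) * t ^ (2 * k))) = A1 t := by
    rw [A1]
    apply tsum_congr
    intro k
    have hc2 : cc k * (2 * (k:ℝ) + 1) = bb k := by rw [cc]; field_simp
    calc cc k * ((2 * k + 1 : ℝ) * t ^ (2 * k)) = (cc k * (2 * (k:ℝ) + 1)) * t ^ (2*k) := by
          push_cast; ring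
    _ = bb k * t ^ (2 * k) := by rw [hc2]
  rw [← hval]
  exact key


lemma summable_h1 {t : ℝ} (ht : |t| < 1) :
    Summable (fun k : ℕ => ((2 * (k:ℝ) + 1) * bb k) * t ^ (2 * k + 1)) :=
  summable_master ht (fun k => (2 * (k:ℝ) + 1) * bb k) (fun k => 2 * k + 1)
    (fun k => by
      have hb1 := bb_le_one k; have hb0 := (bb_pos k).le
      have hk : (0:ℝ) ≤ (k:ℝ) := Nat.cast_nonneg k
      show |(2 * (k:ℝ) + 1) * bb k| ≤ 2 * k + 2
      rw [abs_of_nonneg (by positivity)]; nlinarith)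
    (fun k => by show k ≤ 2 * k + 1; omega)

lemma summable_h2 {t : ℝ} (ht : |t| < 1) :
    Summable (fun k : ℕ => ((2 * (k:ℝ)) * bb k) * t ^ (2 * k + 1)) :=
  summable_master ht (fun k => (2 * (k:ℝ)) * bb k) (fun k => 2 * k + 1)
    (fun k => by
      have hb1 := bb_le_one k; have hb0 := (bb_pos k).le
      have hk : (0:ℝ) ≤ (k:ℝ) := Nat.cast_nonneg k
      show |(2 * (k:ℝ)) * bb k| ≤ 2 * k + 2
      rw [abs_of_nonneg (by positivity)]; nlinarith)
    (fun k => by show k ≤ 2 * k + 1; omega)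

lemma summable_h3 {t : ℝ} (ht : |t| < 1) :
    Summable (fun k => bb k * t ^ (2 * k + 1)) :=
  summable_master ht (fun k => bb k) (fun k => 2 * k + 1)
    (fun k => by
      have hb1 := bb_le_one k; have hb0 := (bb_pos k).le
      have hk : (0:ℝ) ≤ (k:ℝ) := Nat.cast_nonneg k
      show |bb k| ≤ 2 * k + 2
      rw [abs_of_nonneg (by positivity)]; nlinarith)
    (fun k => by show k ≤ 2 * k + 1; omega)

lemma DD_eq {t : ℝ} (ht : |t| < 1) :
    DD t = ∑' (k : ℕ), ((2 * (k:ℝ) + 1) * bb k) * t ^ (2 * k + 1) := by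
  rw [DD, (summable_DD ht).tsum_eq_zero_add]
  have h0 : bb 0 * ((2 * (0:ℕ) : ℝ) * t ^ (2 * 0 - 1)) = 0 := by norm_num
  rw [h0, zero_add]
  apply tsum_congr
  intro k
  have he : 2 * (k + 1) - 1 = 2 * k + 1 := by omega
  have hrec := bb_rec k
  rw [he]
  push_cast
  linear_combination t ^ (2 * k + 1) * hrec

lemma t2_DD_eq {t : ℝ} (ht : |t| < 1) :
    t ^ 2 * DD t = ∑' (k : ℕ), ((2 * (k:ℝ)) * bb k) * t ^ (2 * k + 1) := by
  rw [DD, ← tsum_mul_left]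
  apply tsum_congr
  intro k
  rcases Nat.eq_zero_or_pos k with hk | hk
  · subst hk; norm_num
  · have he : 2 * k - 1 + 2 = 2 * k + 1 := by omega
    calc t ^ 2 * (bb k * ((2 * (k:ℝ)) * t ^ (2 * k - 1)))
        = ((2 * (k:ℝ)) * bb k) * (t ^ (2 * k - 1) * t ^ 2) := by ring
    _ = ((2 * (k:ℝ)) * bb k) * t ^ (2 * k + 1) := by rw [← pow_add, he]

lemma t_A1_eq {t : ℝ} (ht : |t| < 1) :
    t * A1 t = ∑' k, bb k * t ^ (2 * k + 1) := by
  rw [A1, ← tsum_mul_left]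
  apply tsum_congr
  intro k
  calc t * (bb k * t ^ (2 * k)) = bb k * (t ^ (2 * k) * t ^ 1) := by ring
  _ = bb k * t ^ (2 * k + 1) := by rw [← pow_add]

lemma DD_identity {t : ℝ} (ht : |t| < 1) : (1 - t ^ 2) * DD t = t * A1 t := by
  have h1 := DD_eq ht
  have h2 := t2_DD_eq ht
  have h3 := t_A1_eq ht
  have hsub : (1 - t ^ 2) * DD t = DD t - t ^ 2 * DD t := by ring
  rw [hsub, h2, h1, h3, ← (summable_h1 ht).tsum_sub (summable_h2 ht)]
  apply tsum_congr
  intro k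
  ring

lemma A1_zero : A1 0 = 1 := by
  rw [A1, tsum_eq_single 0]
  · norm_num [bb, Nat.centralBinom_zero]
  · intro k hk
    rw [zero_pow (by omega), mul_zero]

lemma AA_zero : AA 0 = 0 := by
  rw [AA]
  convert tsum_zero with k
  rw [zero_pow (by omega), mul_zero]

lemma const_of_deriv {f : ℝ → ℝ} (hf : ∀ s : ℝ, |s| < 1 → HasDerivAt f 0 s)
    {t : ℝ} (ht : |t| < 1) : f t = f 0 := by
  set r : ℝ := (|t| + 1) / 2 with hr
  have h0 : 0 ≤ |t| := abs_nonneg t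
  have hr1 : r < 1 := by rw [hr]; linarith
  have hrt : |t| < r := by rw [hr]; linarith
  have hr0 : (0:ℝ) < r := by rw [hr]; linarith
  have hsmall : ∀ s ∈ Set.Icc (-r) r, |s| < 1 := by
    intro s hs
    have : |s| ≤ r := abs_le.2 ⟨hs.1, hs.2⟩
    linarith
  have key := constant_of_has_deriv_right_zero (f := f) (a := -r) (b := r)
    (fun s hs => ((hf s (hsmall s hs)).continuousAt).continuousWithinAt)
    (fun s hs => ((hf s (hsmall s (Set.Ico_subset_Icc_self hs))).hasDerivWithinAt))
  have h1 : f t = f (-r) := key t ⟨by linarith [neg_abs_le t], by linarith [le_abs_self t]⟩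
  have h2 : f 0 = f (-r) := key 0 ⟨by linarith, by linarith⟩
  rw [h1, h2]

lemma A1_sq {t : ℝ} (ht : |t| < 1) : (1 - t ^ 2) * (A1 t) ^ 2 = 1 := by
  have hQ : ∀ s : ℝ, |s| < 1 →
      HasDerivAt (fun s => (1 - s ^ 2) * (A1 s) ^ 2) 0 s := by
    intro s hs
    have h1 : HasDerivAt (fun s : ℝ => 1 - s ^ 2) (-(2 * s ^ 1)) s :=
      (hasDerivAt_pow 2 s).const_sub 1
    have h2 : HasDerivAt (fun s => (A1 s) ^ 2) (2 * A1 s ^ 1 * DD s) s :=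
      (hasDerivAt_A1 hs).pow 2
    have h3 := h1.mul h2
    have h4 : -(2 * s ^ 1) * A1 s ^ 2 + (1 - s ^ 2) * (2 * A1 s ^ 1 * DD s) = 0 := by
      linear_combination (2 * A1 s) * (DD_identity hs)
    rw [h4] at h3
    exact h3
  have := const_of_deriv hQ ht
  rw [this, A1_zero]
  norm_num

lemma A1_pos {t : ℝ} (ht : |t| < 1) : 1 ≤ A1 t := by
  have h := (summable_A1 ht).le_tsum 0 (fun k _ => by
    have h1 : (0:ℝ) ≤ t ^ (2 * k) := (even_two_mul k).pow_nonneg t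
    exact mul_nonneg (bb_pos k).le h1)
  simpa [A1, bb, Nat.centralBinom_zero] using h

lemma A1_eq {t : ℝ} (ht : |t| < 1) : A1 t = 1 / Real.sqrt (1 - t ^ 2) := by
  have h2 : (0:ℝ) < 1 - t ^ 2 := by
    have := (sq_lt_one_iff_abs_lt_one (a := t)).2 ht
    linarith
  have hpos : (0:ℝ) < A1 t := lt_of_lt_of_le one_pos (A1_pos ht)
  have hsq := A1_sq ht
  have h3 : (A1 t) ^ 2 = (1 - t ^ 2)⁻¹ :=
    eq_inv_of_mul_eq_one_left (by linarith [hsq, mul_comm (1 - t^2) ((A1 t)^2)])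
  have h4 : A1 t = Real.sqrt ((A1 t) ^ 2) := (Real.sqrt_sq hpos.le).symm
  rw [h4, h3, Real.sqrt_inv, one_div]

lemma AA_eq_arcsin {t : ℝ} (ht : |t| < 1) : AA t = Real.arcsin t := by
  have hH : ∀ s : ℝ, |s| < 1 → HasDerivAt (fun s => AA s - Real.arcsin s) 0 s := by
    intro s hs
    have hs' := abs_lt.mp hs
    have ha := hasDerivAt_AA hs
    have hb := Real.hasDerivAt_arcsin (by linarith : s ≠ -1) (by linarith : s ≠ 1)
    have h := ha.sub hb
    have h0 : A1 s - 1 / Real.sqrt (1 - s ^ 2) = 0 := by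
      rw [A1_eq hs]; ring
    rw [h0] at h
    exact h
  have := const_of_deriv hH ht
  rw [AA_zero, Real.arcsin_zero, sub_zero] at this
  linarith [this]


lemma sum_range_cc_le (N : ℕ) : ∑ k ∈ range N, cc k ≤ Real.pi / 2 := by
  -- approximate with s_n = 1 - (1/2)^(n+1) → 1
  set s : ℕ → ℝ := fun m => 1 - (1/2 : ℝ) ^ (m + 1) with hs
  have hs_mem : ∀ m, 0 ≤ s m ∧ s m < 1 := by
    intro m
    have h1 : (0:ℝ) < (1/2 : ℝ) ^ (m+1) := by positivity
    have h2 : ((1:ℝ)/2) ^ (m+1) ≤ (1/2) ^ 1 :=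
      pow_le_pow_of_le_one (by norm_num) (by norm_num) (by omega)
    constructor
    · simp only [hs]; norm_num at h2 ⊢; linarith
    · simp only [hs]; linarith
  have hbound : ∀ m, ∑ k ∈ range N, cc k * (s m) ^ (2 * k + 1) ≤ Real.pi / 2 := by
    intro m
    obtain ⟨h0, h1⟩ := hs_mem m
    have habs : |s m| < 1 := by rw [abs_of_nonneg h0]; exact h1
    have hle : ∑ k ∈ range N, cc k * (s m) ^ (2 * k + 1)
        ≤ ∑' k, cc k * (s m) ^ (2 * k + 1) := by
      apply Summable.sum_le_tsum
      · intro k _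
        have : (0:ℝ) ≤ (s m) ^ (2 * k + 1) := pow_nonneg h0 _
        exact mul_nonneg (cc_nonneg k) this
      · exact summable_AA habs
    have : (∑' k, cc k * (s m) ^ (2 * k + 1)) = Real.arcsin (s m) := AA_eq_arcsin habs
    rw [this] at hle
    exact hle.trans (Real.arcsin_le_pi_div_two _)
  have htend : Filter.Tendsto (fun m => ∑ k ∈ range N, cc k * (s m) ^ (2 * k + 1))
      Filter.atTop (nhds (∑ k ∈ range N, cc k)) := by
    have hls : Filter.Tendsto s Filter.atTop (nhds 1) := by
      have : Filter.Tendsto (fun m : ℕ => (1/2 : ℝ) ^ (m + 1)) Filter.atTop (nhds 0) := by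
        have h := tendsto_pow_atTop_nhds_zero_of_lt_one (r := (1/2:ℝ)) (by norm_num) (by norm_num)
        exact h.comp (Filter.tendsto_add_atTop_nat 1)
      simpa [hs] using (tendsto_const_nhds (x := (1:ℝ))).sub this
    have hcont : Continuous (fun z : ℝ => ∑ k ∈ range N, cc k * z ^ (2 * k + 1)) := by
      continuity
    have := (hcont.tendsto 1).comp hls
    simpa [Function.comp_def] using this
  exact le_of_tendsto htend (Filter.Eventually.of_forall hbound)

lemma summable_cc : Summable cc :=
  summable_of_sum_range_le cc_nonneg sum_range_cc_le

lemma tsum_cc : ∑' k, cc k = Real.pi / 2 := by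
  have hub : ∑' k, cc k ≤ Real.pi / 2 :=
    summable_cc.tsum_le_of_sum_range_le sum_range_cc_le
  have hlb : Real.pi / 2 ≤ ∑' k, cc k := by
    set s : ℕ → ℝ := fun m => 1 - (1/2 : ℝ) ^ (m + 1) with hs
    have hs_mem : ∀ m, 0 ≤ s m ∧ s m < 1 := by
      intro m
      have h1 : (0:ℝ) < (1/2 : ℝ) ^ (m+1) := by positivity
      have h2 : ((1:ℝ)/2) ^ (m+1) ≤ (1/2) ^ 1 :=
        pow_le_pow_of_le_one (by norm_num) (by norm_num) (by omega)
      constructor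
      · simp only [hs]; norm_num at h2 ⊢; linarith
      · simp only [hs]; linarith
    have harc : ∀ m, Real.arcsin (s m) ≤ ∑' k, cc k := by
      intro m
      obtain ⟨h0, h1⟩ := hs_mem m
      have habs : |s m| < 1 := by rw [abs_of_nonneg h0]; exact h1
      rw [← AA_eq_arcsin habs, AA]
      apply Summable.tsum_le_tsum _ (summable_AA habs) summable_cc
      intro k
      have hp : (s m) ^ (2 * k + 1) ≤ 1 := pow_le_one₀ h0 h1.le
      have hpn : (0:ℝ) ≤ (s m) ^ (2 * k + 1) := pow_nonneg h0 _
      calc cc k * (s m) ^ (2 * k + 1) ≤ cc k * 1 :=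
            mul_le_mul_of_nonneg_left hp (cc_nonneg k)
      _ = cc k := mul_one _
    have hls : Filter.Tendsto s Filter.atTop (nhds 1) := by
      have : Filter.Tendsto (fun m : ℕ => (1/2 : ℝ) ^ (m + 1)) Filter.atTop (nhds 0) := by
        have h := tendsto_pow_atTop_nhds_zero_of_lt_one (r := (1/2:ℝ)) (by norm_num) (by norm_num)
        exact h.comp (Filter.tendsto_add_atTop_nat 1)
      simpa [hs] using (tendsto_const_nhds (x := (1:ℝ))).sub this
    have htend : Filter.Tendsto (fun m => Real.arcsin (s m)) Filter.atTop
        (nhds (Real.pi / 2)) := by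
      have := (Real.continuous_arcsin.tendsto 1).comp hls
      simpa [Real.arcsin_one, Function.comp_def] using this
    exact le_of_tendsto htend (Filter.Eventually.of_forall harc)
  linarith

/-- The main analytic fact: the arcsin power series with nonnegative coefficients
converges to arcsin on all of `[-1, 1]`. -/
lemma hasSum_arcsin {t : ℝ} (h1 : -1 ≤ t) (h2 : t ≤ 1) :
    HasSum (fun k => cc k * t ^ (2 * k + 1)) (Real.arcsin t) := by
  rcases lt_or_ge (|t|) 1 with ht | ht
  · have := (summable_AA ht).hasSum
    rwa [show (∑' k, cc k * t ^ (2*k+1)) = Real.arcsin t from AA_eq_arcsin ht] at this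
  · have habs : |t| = 1 := le_antisymm (abs_le.2 ⟨h1, h2⟩) ht
    have hs : HasSum cc (Real.pi / 2) := by
      have := summable_cc.hasSum
      rwa [tsum_cc] at this
    rcases abs_eq (by norm_num : (0:ℝ) ≤ 1) |>.mp habs with rfl | rfl
    · rw [Real.arcsin_one]
      have hfe : (fun k : ℕ => cc k * (1:ℝ) ^ (2 * k + 1)) = cc := by
        funext k; rw [one_pow, mul_one]
      rw [hfe]
      exact hs
    · rw [Real.arcsin_neg_one]
      have hfe : (fun k : ℕ => cc k * (-1:ℝ) ^ (2 * k + 1)) = fun k => -cc k := by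
        funext k
        rw [Odd.neg_one_pow ⟨k, by omega⟩]
        ring
      rw [hfe]
      exact hs.neg


open scoped RealInnerProductSpace

lemma gram_quad {n N : ℕ} (w : Fin n → EuclideanSpace ℝ (Fin N)) (y : Fin n → ℝ) :
    0 ≤ ∑ i, ∑ j, y i * y j * ⟪w i, w j⟫ := by
  have h : (0:ℝ) ≤ ⟪∑ i, y i • w i, ∑ j, y j • w j⟫ := real_inner_self_nonneg
  have he : ⟪∑ i, y i • w i, ∑ j, y j • w j⟫ = ∑ i, ∑ j, y i * y j * ⟪w i, w j⟫ := by
    rw [sum_inner]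
    refine Finset.sum_congr rfl fun i _ => ?_
    rw [real_inner_smul_left, inner_sum, Finset.mul_sum]
    refine Finset.sum_congr rfl fun j _ => ?_
    rw [real_inner_smul_right]; ring
  linarith [he ▸ h]

lemma inner_euclidean {N : ℕ} (a b : EuclideanSpace ℝ (Fin N)) :
    ⟪a, b⟫ = ∑ l, a l * b l := by
  simp [PiLp.inner_apply, RCLike.inner_apply, starRingEnd_apply, mul_comm]

lemma gram_pow_quad {n N M : ℕ} (w : Fin n → EuclideanSpace ℝ (Fin N))
    (u : Fin n → EuclideanSpace ℝ (Fin M)) (m : ℕ) :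
    ∀ y : Fin n → ℝ, 0 ≤ ∑ i, ∑ j, y i * y j * (⟪w i, w j⟫ * ⟪u i, u j⟫ ^ m) := by
  induction m with
  | zero =>
    intro y
    simp only [pow_zero, mul_one]
    exact gram_quad w y
  | succ m ih =>
    intro y
    have key : ∑ i, ∑ j, y i * y j * (⟪w i, w j⟫ * ⟪u i, u j⟫ ^ (m + 1))
        = ∑ l, ∑ i, ∑ j, (y i * u i l) * (y j * u j l) * (⟪w i, w j⟫ * ⟪u i, u j⟫ ^ m) := by
      have step : ∀ i j, y i * y j * (⟪w i, w j⟫ * ⟪u i, u j⟫ ^ (m + 1))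
          = ∑ l, (y i * u i l) * (y j * u j l) * (⟪w i, w j⟫ * ⟪u i, u j⟫ ^ m) := by
        intro i j
        have h1 : ⟪u i, u j⟫ ^ (m + 1) = ⟪u i, u j⟫ ^ m * (∑ l, u i l * u j l) := by
          rw [pow_succ, inner_euclidean]
        rw [h1, Finset.mul_sum, Finset.mul_sum, Finset.mul_sum]
        refine Finset.sum_congr rfl fun l _ => ?_
        ring
      calc ∑ i, ∑ j, y i * y j * (⟪w i, w j⟫ * ⟪u i, u j⟫ ^ (m + 1))
          = ∑ i, ∑ j, ∑ l, (y i * u i l) * (y j * u j l) * (⟪w i, w j⟫ * ⟪u i, u j⟫ ^ m) := by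
            exact Finset.sum_congr rfl fun i _ => Finset.sum_congr rfl fun j _ => step i j
      _ = ∑ i, ∑ l, ∑ j, (y i * u i l) * (y j * u j l) * (⟪w i, w j⟫ * ⟪u i, u j⟫ ^ m) := by
            exact Finset.sum_congr rfl fun i _ => Finset.sum_comm
      _ = ∑ l, ∑ i, ∑ j, (y i * u i l) * (y j * u j l) * (⟪w i, w j⟫ * ⟪u i, u j⟫ ^ m) :=
            Finset.sum_comm
    rw [key]
    exact Finset.sum_nonneg fun l _ => ih (fun i => y i * u i l)

/-- Key positivity: `∑ᵢⱼ yᵢ yⱼ Bᵢⱼ (1/2 + arcsin⟪uᵢ,uⱼ⟫/π) ≥ 0` for a Gram matrix `B`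
and unit vectors `u`. -/
lemma key_quad {n N M : ℕ} (w : Fin n → EuclideanSpace ℝ (Fin N))
    (u : Fin n → EuclideanSpace ℝ (Fin M)) (hu : ∀ i, ‖u i‖ = 1) (y : Fin n → ℝ) :
    0 ≤ ∑ i, ∑ j, y i * y j *
      (⟪w i, w j⟫ * (1 / 2 + Real.arcsin ⟪u i, u j⟫ / Real.pi)) := by
  have hT : ∀ i j, -1 ≤ ⟪u i, u j⟫ ∧ ⟪u i, u j⟫ ≤ 1 := by
    intro i j
    have := abs_real_inner_le_norm (u i) (u j)
    rw [hu i, hu j, mul_one] at this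
    exact ⟨neg_le_of_abs_le this, le_of_abs_le this⟩
  have hSum : ∀ i j, HasSum (fun k => cc k * ⟪u i, u j⟫ ^ (2 * k + 1))
      (Real.arcsin ⟪u i, u j⟫) := fun i j => hasSum_arcsin (hT i j).1 (hT i j).2
  have hterm : ∀ i j, HasSum
      (fun k => (cc k / Real.pi) * (y i * y j * (⟪w i, w j⟫ * ⟪u i, u j⟫ ^ (2 * k + 1))))
      (y i * y j * (⟪w i, w j⟫ * (Real.arcsin ⟪u i, u j⟫ / Real.pi))) := by
    intro i j
    have h1 := ((hSum i j).div_const Real.pi).mul_left (y i * y j * ⟪w i, w j⟫)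
    have hfe : (fun k => y i * y j * ⟪w i, w j⟫ * (cc k * ⟪u i, u j⟫ ^ (2 * k + 1) / Real.pi))
        = fun k => (cc k / Real.pi) * (y i * y j * (⟪w i, w j⟫ * ⟪u i, u j⟫ ^ (2 * k + 1))) :=
      funext fun k => by ring
    have hv : y i * y j * ⟪w i, w j⟫ * (Real.arcsin ⟪u i, u j⟫ / Real.pi)
        = y i * y j * (⟪w i, w j⟫ * (Real.arcsin ⟪u i, u j⟫ / Real.pi)) := by ring
    rw [hfe, hv] at h1
    exact h1
  have hsplit : (∑ i, ∑ j, y i * y j * (⟪w i, w j⟫ * (1 / 2 + Real.arcsin ⟪u i, u j⟫ / Real.pi)))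
      = (∑ i, ∑ j, y i * y j * (⟪w i, w j⟫ * (1 / 2)))
        + ∑ i, ∑ j, y i * y j * (⟪w i, w j⟫ * (Real.arcsin ⟪u i, u j⟫ / Real.pi)) := by
    rw [← Finset.sum_add_distrib]
    refine Finset.sum_congr rfl fun i _ => ?_
    rw [← Finset.sum_add_distrib]
    exact Finset.sum_congr rfl fun j _ => by ring
  rw [hsplit]
  have hfirst : 0 ≤ ∑ i, ∑ j, y i * y j * (⟪w i, w j⟫ * (1 / 2)) := by
    have h := gram_quad w y
    have he : (∑ i, ∑ j, y i * y j * (⟪w i, w j⟫ * (1 / 2)))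
        = (1 / 2) * ∑ i, ∑ j, y i * y j * ⟪w i, w j⟫ := by
      rw [Finset.mul_sum]
      refine Finset.sum_congr rfl fun i _ => ?_
      rw [Finset.mul_sum]
      exact Finset.sum_congr rfl fun j _ => by ring
    rw [he]
    positivity
  have hsecond : 0 ≤ ∑ i, ∑ j, y i * y j * (⟪w i, w j⟫ * (Real.arcsin ⟪u i, u j⟫ / Real.pi)) := by
    have hAll : HasSum
        (fun k => ∑ i, ∑ j,
          (cc k / Real.pi) * (y i * y j * (⟪w i, w j⟫ * ⟪u i, u j⟫ ^ (2 * k + 1))))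
        (∑ i, ∑ j, y i * y j * (⟪w i, w j⟫ * (Real.arcsin ⟪u i, u j⟫ / Real.pi))) :=
      hasSum_sum fun i _ => hasSum_sum fun j _ => hterm i j
    have hk : ∀ k, 0 ≤ ∑ i, ∑ j,
        (cc k / Real.pi) * (y i * y j * (⟪w i, w j⟫ * ⟪u i, u j⟫ ^ (2 * k + 1))) := by
      intro k
      have hpos := gram_pow_quad w u (2 * k + 1) y
      have he : (∑ i, ∑ j,
          (cc k / Real.pi) * (y i * y j * (⟪w i, w j⟫ * ⟪u i, u j⟫ ^ (2 * k + 1))))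
          = (cc k / Real.pi) * ∑ i, ∑ j, y i * y j * (⟪w i, w j⟫ * ⟪u i, u j⟫ ^ (2 * k + 1)) := by
        rw [Finset.mul_sum]
        exact Finset.sum_congr rfl fun i _ => by rw [Finset.mul_sum]
      rw [he]
      have hccpi : 0 ≤ cc k / Real.pi := div_nonneg (cc_nonneg k) Real.pi_pos.le
      positivity
    exact hasSum_le (fun k => hk k) hasSum_zero hAll
  linarith


open Matrix in
lemma conj_decomp {n : ℕ} {A : Matrix (Fin n) (Fin n) ℝ} (hA : A.IsHermitian) (μ ν : ℝ) :
    μ • (1 : Matrix (Fin n) (Fin n) ℝ) + ν • A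
      = (hA.eigenvectorUnitary : Matrix (Fin n) (Fin n) ℝ) *
        Matrix.diagonal (fun i => μ + ν * hA.eigenvalues i) *
        star (hA.eigenvectorUnitary : Matrix (Fin n) (Fin n) ℝ) := by
  set U := (hA.eigenvectorUnitary : Matrix (Fin n) (Fin n) ℝ) with hUdef
  have hU : U * star U = 1 := Matrix.mem_unitaryGroup_iff.mp hA.eigenvectorUnitary.2
  have hspec : A = U * Matrix.diagonal (RCLike.ofReal ∘ hA.eigenvalues) * star U :=
    hA.spectral_theorem
  have hdiag : Matrix.diagonal (fun i => μ + ν * hA.eigenvalues i)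
      = μ • (1 : Matrix (Fin n) (Fin n) ℝ)
        + ν • Matrix.diagonal (RCLike.ofReal ∘ hA.eigenvalues) := by
    ext i j
    rcases eq_or_ne i j with rfl | hij
    · simp [Matrix.diagonal_apply_eq, Matrix.one_apply_eq]
    · simp [Matrix.diagonal_apply_ne _ hij, Matrix.one_apply_ne hij]
  rw [hdiag, Matrix.mul_add, Matrix.add_mul]
  rw [Matrix.mul_smul, Matrix.smul_mul, Matrix.mul_smul, Matrix.smul_mul, mul_one, hU, ← hspec]

open Matrix in
lemma spec_eq {n : ℕ} {A : Matrix (Fin n) (Fin n) ℝ} (hA : A.IsHermitian) :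
    spectrum ℝ A = Set.range hA.eigenvalues := by
  ext μ
  constructor
  · intro hμ
    by_contra hr
    rw [spectrum.mem_iff] at hμ
    apply hμ
    have hd : algebraMap ℝ (Matrix (Fin n) (Fin n) ℝ) μ - A
        = (hA.eigenvectorUnitary : Matrix (Fin n) (Fin n) ℝ) *
          Matrix.diagonal (fun i => μ - hA.eigenvalues i) *
          star (hA.eigenvectorUnitary : Matrix (Fin n) (Fin n) ℝ) := by
      have h := conj_decomp hA μ (-1)
      rw [neg_smul, one_smul] at h
      rw [Algebra.algebraMap_eq_smul_one, sub_eq_add_neg]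
      rw [show (fun i => μ + (-1) * hA.eigenvalues i) = (fun i => μ - hA.eigenvalues i) from
        funext fun i => by ring] at h
      exact h
    rw [hd, Matrix.isUnit_iff_isUnit_det, Matrix.det_mul, Matrix.det_mul, Matrix.det_diagonal]
    have hU : (hA.eigenvectorUnitary : Matrix (Fin n) (Fin n) ℝ) *
        star (hA.eigenvectorUnitary : Matrix (Fin n) (Fin n) ℝ) = 1 :=
      Matrix.mem_unitaryGroup_iff.mp hA.eigenvectorUnitary.2
    have hUdet : (hA.eigenvectorUnitary : Matrix (Fin n) (Fin n) ℝ).det *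
        (star (hA.eigenvectorUnitary : Matrix (Fin n) (Fin n) ℝ)).det = 1 := by
      rw [← Matrix.det_mul, hU, Matrix.det_one]
    rw [isUnit_iff_ne_zero]
    intro hzero
    have : ∏ i, (μ - hA.eigenvalues i) = 0 := by
      have h1 : ((hA.eigenvectorUnitary : Matrix (Fin n) (Fin n) ℝ).det *
          (star (hA.eigenvectorUnitary : Matrix (Fin n) (Fin n) ℝ)).det) *
          ∏ i, (μ - hA.eigenvalues i) = 0 := by
        rw [← hzero]; ring
      rwa [hUdet, one_mul] at h1
    obtain ⟨i, _, hi⟩ := Finset.prod_eq_zero_iff.mp this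
    exact hr ⟨i, by linarith [sub_eq_zero.mp hi]⟩
  · rintro ⟨i, rfl⟩
    exact hA.eigenvalues_mem_spectrum_real i

open Matrix in
lemma shift_psd_lower {n : ℕ} {A : Matrix (Fin n) (Fin n) ℝ} (hA : A.IsHermitian) {a : ℝ}
    (h : ∀ i, a ≤ hA.eigenvalues i) : (A - a • 1).PosSemidef := by
  have hd : A - a • (1 : Matrix (Fin n) (Fin n) ℝ)
      = (hA.eigenvectorUnitary : Matrix (Fin n) (Fin n) ℝ) *
        Matrix.diagonal (fun i => -a + 1 * hA.eigenvalues i) *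
        star (hA.eigenvectorUnitary : Matrix (Fin n) (Fin n) ℝ) := by
    have hdc := conj_decomp hA (-a) 1
    rw [neg_smul, one_smul] at hdc
    rw [sub_eq_neg_add]
    exact hdc
  rw [hd, Matrix.star_eq_conjTranspose]
  have hdg : (Matrix.diagonal (fun i => -a + 1 * hA.eigenvalues i)).PosSemidef :=
    Matrix.posSemidef_diagonal_iff.mpr fun i => by have := h i; simp; linarith
  exact hdg.mul_mul_conjTranspose_same (hA.eigenvectorUnitary : Matrix (Fin n) (Fin n) ℝ)

open Matrix in
lemma shift_psd_upper {n : ℕ} {A : Matrix (Fin n) (Fin n) ℝ} (hA : A.IsHermitian) {b : ℝ}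
    (h : ∀ i, hA.eigenvalues i ≤ b) : (b • 1 - A).PosSemidef := by
  have hd : b • (1 : Matrix (Fin n) (Fin n) ℝ) - A
      = (hA.eigenvectorUnitary : Matrix (Fin n) (Fin n) ℝ) *
        Matrix.diagonal (fun i => b + (-1) * hA.eigenvalues i) *
        star (hA.eigenvectorUnitary : Matrix (Fin n) (Fin n) ℝ) := by
    have hdc := conj_decomp hA b (-1)
    rw [neg_smul, one_smul] at hdc
    rw [sub_eq_add_neg]
    exact hdc
  rw [hd, Matrix.star_eq_conjTranspose]
  have hdg : (Matrix.diagonal (fun i => b + (-1) * hA.eigenvalues i)).PosSemidef :=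
    Matrix.posSemidef_diagonal_iff.mpr fun i => by have := h i; simp; linarith
  exact hdg.mul_mul_conjTranspose_same (hA.eigenvectorUnitary : Matrix (Fin n) (Fin n) ℝ)

lemma psd_gram {n : ℕ} {A : Matrix (Fin n) (Fin n) ℝ} (hA : A.PosSemidef) :
    ∃ w : Fin n → EuclideanSpace ℝ (Fin n), ∀ i j, A i j = ⟪w i, w j⟫ := by
  obtain ⟨B, hB⟩ : ∃ B : Matrix (Fin n) (Fin n) ℝ, A = star B * B := by
    open scoped MatrixOrder in
    exact CStarAlgebra.nonneg_iff_eq_star_mul_self.mp hA.nonneg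
  refine ⟨fun i => WithLp.toLp 2 (fun l => B l i), fun i j => ?_⟩
  rw [hB, inner_euclidean]
  simp [Matrix.mul_apply, Matrix.star_eq_conjTranspose, Matrix.conjTranspose_apply]

open Matrix in
lemma exists_unit_eigvec {n : ℕ} {A : Matrix (Fin n) (Fin n) ℝ} (hA : A.IsHermitian)
    (i : Fin n) :
    ∃ v : Fin n → ℝ, (∑ l, v l * v l = 1) ∧
      ∑ i', ∑ j, v i' * v j * A i' j = hA.eigenvalues i := by
  refine ⟨⇑(hA.eigenvectorBasis i), ?_, ?_⟩
  · have h1 : ‖hA.eigenvectorBasis i‖ = 1 := hA.eigenvectorBasis.orthonormal.1 i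
    have h2 : ⟪hA.eigenvectorBasis i, hA.eigenvectorBasis i⟫ = 1 := by
      rw [real_inner_self_eq_norm_mul_norm, h1, mul_one]
    rw [inner_euclidean] at h2
    exact h2
  · have hmv : A *ᵥ ⇑(hA.eigenvectorBasis i) = hA.eigenvalues i • ⇑(hA.eigenvectorBasis i) :=
      hA.mulVec_eigenvectorBasis i
    have h1 : ‖hA.eigenvectorBasis i‖ = 1 := hA.eigenvectorBasis.orthonormal.1 i
    have h2 : (∑ l, (hA.eigenvectorBasis i) l * (hA.eigenvectorBasis i) l) = 1 := by
      have h2' : ⟪hA.eigenvectorBasis i, hA.eigenvectorBasis i⟫ = 1 := by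
        rw [real_inner_self_eq_norm_mul_norm, h1, mul_one]
      rw [inner_euclidean] at h2'
      exact h2'
    calc ∑ i', ∑ j, (hA.eigenvectorBasis i) i' * (hA.eigenvectorBasis i) j * A i' j
        = ∑ i', (hA.eigenvectorBasis i) i' * (A *ᵥ ⇑(hA.eigenvectorBasis i)) i' := by
          refine Finset.sum_congr rfl fun i' _ => ?_
          rw [Matrix.mulVec, dotProduct, Finset.mul_sum]
          exact Finset.sum_congr rfl fun j _ => by
            ring
    _ = ∑ i', (hA.eigenvectorBasis i) i' * (hA.eigenvalues i * (hA.eigenvectorBasis i) i') := by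
          rw [hmv]
          exact Finset.sum_congr rfl fun i' _ => by
            simp only [Pi.smul_apply, smul_eq_mul]
    _ = hA.eigenvalues i * ∑ i', (hA.eigenvectorBasis i) i' * (hA.eigenvectorBasis i) i' := by
          rw [Finset.mul_sum]
          exact Finset.sum_congr rfl fun i' _ => by ring
    _ = hA.eigenvalues i := by rw [h2, mul_one]

open Matrix in
lemma psd_quad {n : ℕ} {A : Matrix (Fin n) (Fin n) ℝ} (hA : A.PosSemidef) (y : Fin n → ℝ) :
    0 ≤ ∑ i, ∑ j, y i * y j * A i j := by
  have h := hA.dotProduct_mulVec_nonneg y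
  have he : dotProduct (star y) (A *ᵥ y) = ∑ i, ∑ j, y i * y j * A i j := by
    rw [dotProduct]
    refine Finset.sum_congr rfl fun i _ => ?_
    rw [Matrix.mulVec, dotProduct, Finset.mul_sum]
    refine Finset.sum_congr rfl fun j _ => ?_
    simp only [Pi.star_apply, star_trivial]
    ring
  rwa [he] at h


open Matrix in
lemma dot_quad {n : ℕ} (M : Matrix (Fin n) (Fin n) ℝ) (v : Fin n → ℝ) :
    dotProduct (star v) (M *ᵥ v) = ∑ i, ∑ j, v i * v j * M i j := by
  rw [dotProduct]
  refine Finset.sum_congr rfl fun i _ => ?_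
  rw [Matrix.mulVec, dotProduct, Finset.mul_sum]
  refine Finset.sum_congr rfl fun j _ => ?_
  simp only [Pi.star_apply, star_trivial]
  ring

lemma delta_quad {n : ℕ} (a : ℝ) (v : Fin n → ℝ) :
    ∑ i, ∑ j, v i * v j * (a * (if i = j then (1:ℝ) else 0)) = a * ∑ i, v i * v i := by
  rw [Finset.mul_sum]
  refine Finset.sum_congr rfl fun i _ => ?_
  rw [Finset.sum_eq_single_of_mem i (Finset.mem_univ i)]
  · rw [if_pos rfl]; ring
  · intro j _ hj
    rw [if_neg (fun h => hj (h.symm)), mul_zero, mul_zero]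

end ShallowNTKAux

open scoped RealInnerProductSpace

/-- Theorem 5.1 of the paper: better NTK conditioning of the shallow
ReLU network relative to the linear model. Let `x 1, …, x n ∈ ℝ^d` be nonzero, let `G`
be the Gram matrix `G i j = ⟨x i, x j⟩`, and let `K` be the infinite-width NTK matrix of
the shallow ReLU network, `K i j = ⟨x i, x j⟩ (1 − θ i j / π)` where `θ i j` is the angle
between `x i` and `x j`. Then `λ_min(K) ≥ λ_min(G)` and `λ_max(K) ≤ λ_max(G)`
(eigenvalue extremes expressed via `sInf`/`sSup` of the spectrum); consequently, if `G`
is positive definite then `K` is positive definite and `κ(K) ≤ κ(G)`. -/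
theorem shallow_relu_ntk_better_conditioning
    {n d : ℕ} (hn : 0 < n) (hd : 0 < d)
    (x : Fin n → EuclideanSpace ℝ (Fin d)) (hx : ∀ i, x i ≠ 0)
    (G K : Matrix (Fin n) (Fin n) ℝ)
    (hG : ∀ i j, G i j = ⟪x i, x j⟫)
    (hK : ∀ i j, K i j = ⟪x i, x j⟫ * (1 - InnerProductGeometry.angle (x i) (x j) / Real.pi)) :
    sInf (spectrum ℝ G) ≤ sInf (spectrum ℝ K) ∧
    sSup (spectrum ℝ K) ≤ sSup (spectrum ℝ G) ∧
    (G.PosDef → K.PosDef ∧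
      sSup (spectrum ℝ K) / sInf (spectrum ℝ K) ≤
        sSup (spectrum ℝ G) / sInf (spectrum ℝ G)) := by
  classical
  open ShallowNTKAux in
  -- symmetry of G and K
  have hGsym : G.IsHermitian := by
    ext i j
    rw [Matrix.conjTranspose_apply, hG, hG, star_trivial]
    exact real_inner_comm _ _
  have hKsym : K.IsHermitian := by
    ext i j
    rw [Matrix.conjTranspose_apply, hK, hK, star_trivial,
      InnerProductGeometry.angle_comm, real_inner_comm]
  -- normalized data vectors
  set u : Fin n → EuclideanSpace ℝ (Fin d) := fun i => (‖x i‖⁻¹ : ℝ) • x i with hu_def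
  have hu : ∀ i, ‖u i‖ = 1 := fun i => norm_smul_inv_norm (hx i)
  have hinner_u : ∀ i j, ⟪u i, u j⟫ = ⟪x i, x j⟫ / (‖x i‖ * ‖x j‖) := by
    intro i j
    have hni : ‖x i‖ ≠ 0 := norm_ne_zero_iff.2 (hx i)
    have hnj : ‖x j‖ ≠ 0 := norm_ne_zero_iff.2 (hx j)
    rw [hu_def]
    simp only []
    rw [real_inner_smul_left, real_inner_smul_right]
    field_simp
  have hangle : ∀ i j, InnerProductGeometry.angle (x i) (x j)
      = Real.pi / 2 - Real.arcsin ⟪u i, u j⟫ := by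
    intro i j
    unfold InnerProductGeometry.angle
    rw [← hinner_u i j, Real.arccos_eq_pi_div_two_sub_arcsin]
  have hpi := Real.pi_ne_zero
  have hKentry : ∀ i j, K i j = G i j * (1 / 2 + Real.arcsin ⟪u i, u j⟫ / Real.pi) := by
    intro i j
    rw [hK, hG, hangle i j]
    have hcoef : (1 : ℝ) - (Real.pi / 2 - Real.arcsin ⟪u i, u j⟫) / Real.pi
        = 1 / 2 + Real.arcsin ⟪u i, u j⟫ / Real.pi := by
      field_simp
      ring
    rw [hcoef]
  have hMone : ∀ i, (1 / 2 + Real.arcsin ⟪u i, u i⟫ / Real.pi) = 1 := by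
    intro i
    have h1 : ⟪u i, u i⟫ = 1 := by
      rw [real_inner_self_eq_norm_mul_norm, hu i]; norm_num
    rw [h1, Real.arcsin_one, div_right_comm, div_self hpi]
    norm_num
  -- spectra
  have specG := spec_eq hGsym
  have specK := spec_eq hKsym
  set a := sInf (spectrum ℝ G) with ha_def
  set b := sSup (spectrum ℝ G) with hb_def
  have ha_le : ∀ i, a ≤ hGsym.eigenvalues i := by
    intro i
    rw [ha_def, specG]
    exact csInf_le (Set.finite_range _).bddBelow ⟨i, rfl⟩
  have hb_ge : ∀ i, hGsym.eigenvalues i ≤ b := by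
    intro i
    rw [hb_def, specG]
    exact le_csSup (Set.finite_range _).bddAbove ⟨i, rfl⟩
  obtain ⟨w1, hw1⟩ := psd_gram (shift_psd_lower hGsym ha_le)
  obtain ⟨w2, hw2⟩ := psd_gram (shift_psd_upper hGsym hb_ge)
  -- quadratic form bounds for K
  have hlow_entry : ∀ i j, (G - a • 1) i j * (1 / 2 + Real.arcsin ⟪u i, u j⟫ / Real.pi)
      = K i j - a * (if i = j then (1:ℝ) else 0) := by
    intro i j
    rw [Matrix.sub_apply, Matrix.smul_apply, Matrix.one_apply, smul_eq_mul]
    rcases eq_or_ne i j with rfl | hij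
    · rw [if_pos rfl, hMone i, hKentry i i, hMone i]
      ring
    · rw [if_neg hij, hKentry i j]
      ring
  have hup_entry : ∀ i j, (b • 1 - G) i j * (1 / 2 + Real.arcsin ⟪u i, u j⟫ / Real.pi)
      = b * (if i = j then (1:ℝ) else 0) - K i j := by
    intro i j
    rw [Matrix.sub_apply, Matrix.smul_apply, Matrix.one_apply, smul_eq_mul]
    rcases eq_or_ne i j with rfl | hij
    · rw [if_pos rfl, hMone i, hKentry i i, hMone i]
      ring
    · rw [if_neg hij, hKentry i j]
      ring
  have klow : ∀ y : Fin n → ℝ,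
      0 ≤ ∑ i, ∑ j, y i * y j * (K i j - a * (if i = j then (1:ℝ) else 0)) := by
    intro y
    have h := key_quad w1 u hu y
    have he : (∑ i, ∑ j, y i * y j *
        (⟪w1 i, w1 j⟫ * (1 / 2 + Real.arcsin ⟪u i, u j⟫ / Real.pi)))
        = ∑ i, ∑ j, y i * y j * (K i j - a * (if i = j then (1:ℝ) else 0)) := by
      refine Finset.sum_congr rfl fun i _ => Finset.sum_congr rfl fun j _ => ?_
      rw [← hw1 i j, hlow_entry i j]
    rwa [he] at h
  have khigh : ∀ y : Fin n → ℝ,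
      0 ≤ ∑ i, ∑ j, y i * y j * (b * (if i = j then (1:ℝ) else 0) - K i j) := by
    intro y
    have h := key_quad w2 u hu y
    have he : (∑ i, ∑ j, y i * y j *
        (⟪w2 i, w2 j⟫ * (1 / 2 + Real.arcsin ⟪u i, u j⟫ / Real.pi)))
        = ∑ i, ∑ j, y i * y j * (b * (if i = j then (1:ℝ) else 0) - K i j) := by
      refine Finset.sum_congr rfl fun i _ => Finset.sum_congr rfl fun j _ => ?_
      rw [← hw2 i j, hup_entry i j]
    rwa [he] at h
  -- splitting the quadratic forms
  have hsplit_low : ∀ v : Fin n → ℝ,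
      (∑ i, ∑ j, v i * v j * (K i j - a * (if i = j then (1:ℝ) else 0)))
      = (∑ i, ∑ j, v i * v j * K i j) - a * ∑ i, v i * v i := by
    intro v
    rw [← delta_quad a v, ← Finset.sum_sub_distrib]
    refine Finset.sum_congr rfl fun i _ => ?_
    rw [← Finset.sum_sub_distrib]
    exact Finset.sum_congr rfl fun j _ => by ring
  have hsplit_up : ∀ v : Fin n → ℝ,
      (∑ i, ∑ j, v i * v j * (b * (if i = j then (1:ℝ) else 0) - K i j))
      = b * (∑ i, v i * v i) - ∑ i, ∑ j, v i * v j * K i j := by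
    intro v
    rw [← delta_quad b v, ← Finset.sum_sub_distrib]
    refine Finset.sum_congr rfl fun i _ => ?_
    rw [← Finset.sum_sub_distrib]
    exact Finset.sum_congr rfl fun j _ => by ring
  -- eigenvalue bounds for K
  have eigK_lb : ∀ i, a ≤ hKsym.eigenvalues i := by
    intro i
    obtain ⟨v, hv1, hv2⟩ := exists_unit_eigvec hKsym i
    have h := klow v
    rw [hsplit_low v, hv2, hv1, mul_one] at h
    linarith
  have eigK_ub : ∀ i, hKsym.eigenvalues i ≤ b := by
    intro i
    obtain ⟨v, hv1, hv2⟩ := exists_unit_eigvec hKsym i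
    have h := khigh v
    rw [hsplit_up v, hv2, hv1, mul_one] at h
    linarith
  have i0 : Fin n := ⟨0, hn⟩
  have hKne : (Set.range hKsym.eigenvalues).Nonempty := ⟨hKsym.eigenvalues i0, ⟨i0, rfl⟩⟩
  have goal1 : sInf (spectrum ℝ G) ≤ sInf (spectrum ℝ K) := by
    rw [specK, ← ha_def]
    refine le_csInf hKne ?_
    rintro μ ⟨i, rfl⟩
    exact eigK_lb i
  have goal2 : sSup (spectrum ℝ K) ≤ sSup (spectrum ℝ G) := by
    rw [specK, ← hb_def]
    refine csSup_le hKne ?_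
    rintro μ ⟨i, rfl⟩
    exact eigK_ub i
  refine ⟨goal1, goal2, ?_⟩
  intro hGpd
  -- positivity of a
  have ha_mem : a ∈ spectrum ℝ G := by
    rw [ha_def]
    refine Set.Nonempty.csInf_mem ?_ ?_
    · rw [specG]; exact ⟨hGsym.eigenvalues i0, ⟨i0, rfl⟩⟩
    · rw [specG]; exact Set.finite_range _
  have ha_pos : 0 < a := by
    rw [specG] at ha_mem
    obtain ⟨i, hi⟩ := ha_mem
    have := hGpd.eigenvalues_pos i
    have heq : hGpd.1.eigenvalues i = hGsym.eigenvalues i := rfl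
    rw [heq, hi] at this
    exact this
  have hab : a ≤ b := by
    have := ha_le i0
    have := hb_ge i0
    linarith
  constructor
  · -- K is positive definite
    refine Matrix.PosDef.of_dotProduct_mulVec_pos hKsym fun v hv => ?_
    rw [dot_quad]
    have h := klow v
    rw [hsplit_low v] at h
    have hvpos : 0 < ∑ i, v i * v i := by
      obtain ⟨l, hl⟩ := Function.ne_iff.mp hv
      refine Finset.sum_pos' (fun i _ => mul_self_nonneg _) ⟨l, Finset.mem_univ l, ?_⟩
      exact mul_self_pos.2 hl
    nlinarith
  · -- condition numbers
    have haK : a ≤ sInf (spectrum ℝ K) := goal1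
    have hbK : sSup (spectrum ℝ K) ≤ b := goal2
    have haK_pos : 0 < sInf (spectrum ℝ K) := lt_of_lt_of_le ha_pos haK
    exact div_le_div₀ (by linarith) hbK ha_pos haK
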